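/- If A ∈ M_n(ℂ) is a nonzero scalar multiple of a unitary matrix and B ∈ M_n(ℂ) satisfies B ⊥ A, then A ⊥ B. -/

import Mathlib

open scoped Matrix.Norms.L2Operator Matrix

/-- Action of a complex matrix on Euclidean space. -/
noncomputable def mulE {n : ℕ} (A : Matrix (Fin n) (Fin n) ℂ)
    (u : EuclideanSpace ℂ (Fin n)) : EuclideanSpace ℂ (Fin n) :=
  Matrix.toEuclideanCLM (𝕜 := ℂ) A u

/-- The set of norm-attaining vectors of `A`. -/
noncomputable def M₀ {n : ℕ} (A : Matrix (Fin n) (Fin n) ℂ) :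
    Set (EuclideanSpace ℂ (Fin n)) :=
  {u | ‖mulE A u‖ = ‖A‖ * ‖u‖}

/-- Birkhoff–James orthogonality in `M_n(ℂ)` with the operator norm. -/
noncomputable def BJ {n : ℕ} (A B : Matrix (Fin n) (Fin n) ℂ) : Prop :=
  ∀ c : ℂ, ‖A‖ ≤ ‖A + c • B‖

/-- The outgoing BJ neighborhood `A^⊥`. -/
noncomputable def orthSet {n : ℕ} (A : Matrix (Fin n) (Fin n) ℂ) :
    Set (Matrix (Fin n) (Fin n) ℂ) :=
  {B | BJ A B}

section Helpers

variable {n : ℕ}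

/-- A unitary matrix acts isometrically on Euclidean space. -/
lemma unit_iso {U : Matrix (Fin n) (Fin n) ℂ} (hU : Uᴴ * U = 1)
    (x : EuclideanSpace ℂ (Fin n)) :
    ‖Matrix.toEuclideanCLM (𝕜 := ℂ) U x‖ = ‖x‖ := by
  have hadj : ContinuousLinearMap.adjoint (Matrix.toEuclideanCLM (𝕜 := ℂ) U)
      = Matrix.toEuclideanCLM (𝕜 := ℂ) Uᴴ := by
    rw [← Matrix.star_eq_conjTranspose, map_star]
    rfl
  have h : (inner ℂ (Matrix.toEuclideanCLM (𝕜 := ℂ) U x) (Matrix.toEuclideanCLM (𝕜 := ℂ) U x) : ℂ)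
      = inner ℂ x x := by
    rw [← ContinuousLinearMap.adjoint_inner_left, hadj, ← ContinuousLinearMap.comp_apply,
      ← ContinuousLinearMap.mul_def, ← map_mul, hU, map_one, ContinuousLinearMap.one_apply]
  rw [norm_eq_sqrt_re_inner (𝕜 := ℂ), norm_eq_sqrt_re_inner (𝕜 := ℂ) x, h]

/-- Left multiplication by a unitary preserves the operator norm. -/
lemma unit_mul_norm {U : Matrix (Fin n) (Fin n) ℂ} (hU : Uᴴ * U = 1)
    (X : Matrix (Fin n) (Fin n) ℂ) : ‖U * X‖ = ‖X‖ := by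
  rw [Matrix.cstar_norm_def, Matrix.cstar_norm_def (A := X), map_mul]
  refine le_antisymm (ContinuousLinearMap.opNorm_le_bound _ (norm_nonneg _) fun x => ?_)
    (ContinuousLinearMap.opNorm_le_bound _ (norm_nonneg _) fun x => ?_)
  · rw [ContinuousLinearMap.mul_apply, unit_iso hU]
    exact ContinuousLinearMap.le_opNorm _ _
  · calc ‖Matrix.toEuclideanCLM (𝕜 := ℂ) X x‖
        = ‖(Matrix.toEuclideanCLM (𝕜 := ℂ) U * Matrix.toEuclideanCLM (𝕜 := ℂ) X) x‖ := by
          rw [ContinuousLinearMap.mul_apply, unit_iso hU]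
      _ ≤ _ := ContinuousLinearMap.le_opNorm _ _

private lemma aux_sK_le (δ K : ℝ) (hδ : 0 < δ) (hK : 0 ≤ K) : δ / (K + 1) * K ≤ δ := by
  rw [div_mul_eq_mul_div, div_le_iff₀ (by positivity)]
  nlinarith

private lemma aux_arith (a b gv δ s K : ℝ) (h3 : a ≤ b) (ha : 0 ≤ a) (h5 : gv ≤ -δ)
    (hsK : s * K ≤ δ) (hs : 0 < s) :
    a ^ 2 + 2 * (s * gv) + s ^ 2 * K ≤ b ^ 2 - s * δ := by nlinarith

end Helpers

set_option maxHeartbeats 1000000 in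
theorem scalar_unitary_right_symmetric {n : ℕ} (A B : Matrix (Fin n) (Fin n) ℂ)
    (c : ℂ) (U : Matrix (Fin n) (Fin n) ℂ) (hc : c ≠ 0) (hU : Uᴴ * U = 1) (hA : A = c • U)
    (hBA : BJ B A) : BJ A B := by
  intro l
  by_contra hcon
  push_neg at hcon
  -- trivial case n = 0
  rcases Nat.eq_zero_or_pos n with rfl | hn
  · have hA0 : A = 0 := Subsingleton.elim A 0
    have hB0 : B = 0 := Subsingleton.elim B 0
    rw [hA0, hB0] at hcon
    simp at hcon
  haveI : Nonempty (Fin n) := ⟨⟨0, hn⟩⟩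
  have hUU : U * Uᴴ = 1 := mul_eq_one_comm.mp hU
  have hUH : (Uᴴ)ᴴ * Uᴴ = 1 := by rw [Matrix.conjTranspose_conjTranspose]; exact hUU
  set C : Matrix (Fin n) (Fin n) ℂ := Uᴴ * B with hCdef
  set v1 : EuclideanSpace ℂ (Fin n) := EuclideanSpace.single ⟨0, hn⟩ 1 with hv1def
  have hv1 : ‖v1‖ = 1 := by simp [hv1def]
  -- ‖U‖ = 1 and ‖A‖ = ‖c‖
  have hU1 : ‖U‖ = 1 := by
    rw [Matrix.cstar_norm_def]
    refine le_antisymm (ContinuousLinearMap.opNorm_le_bound _ zero_le_one fun x => by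
      rw [unit_iso hU, one_mul]) ?_
    calc (1:ℝ) = ‖Matrix.toEuclideanCLM (𝕜 := ℂ) U v1‖ := by rw [unit_iso hU, hv1]
      _ ≤ ‖Matrix.toEuclideanCLM (𝕜 := ℂ) U‖ * ‖v1‖ := ContinuousLinearMap.le_opNorm _ _
      _ = _ := by rw [hv1, mul_one]
  have hnormA : ‖A‖ = ‖c‖ := by rw [hA, norm_smul, hU1, mul_one]
  -- key smallness after unitary reduction
  have key : ‖c • (1 : Matrix (Fin n) (Fin n) ℂ) + l • C‖ < ‖c‖ := by
    have he : Uᴴ * (A + l • B) = c • 1 + l • C := by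
      rw [hA, Matrix.mul_add, Matrix.mul_smul, Matrix.mul_smul, hU]
    calc ‖c • (1 : Matrix (Fin n) (Fin n) ℂ) + l • C‖ = ‖Uᴴ * (A + l • B)‖ := by rw [he]
      _ = ‖A + l • B‖ := unit_mul_norm hUH _
      _ < ‖A‖ := hcon
      _ = ‖c‖ := hnormA
  set S := Matrix.toEuclideanCLM (𝕜 := ℂ) C with hSdef
  set g : EuclideanSpace ℂ (Fin n) → ℝ :=
    fun v => ((starRingEnd ℂ) c * (l * inner ℂ v (S v))).re with hgdef
  -- the numerical range condition
  have hneg : ∀ v : EuclideanSpace ℂ (Fin n), ‖v‖ = 1 → g v < 0 := by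
    intro v hv
    set z : ℂ := l * inner ℂ v (S v) with hzdef
    have h2 : (inner ℂ v (Matrix.toEuclideanCLM (𝕜 := ℂ) (c • 1 + l • C) v) : ℂ) = c + z := by
      rw [map_add, map_smul, map_smul, map_one, ContinuousLinearMap.add_apply,
        ContinuousLinearMap.smul_apply, ContinuousLinearMap.smul_apply,
        ContinuousLinearMap.one_apply, inner_add_right, inner_smul_right, inner_smul_right,
        inner_self_eq_norm_sq_to_K, hv, hzdef]
      push_cast
      ring
    have hTv : ‖Matrix.toEuclideanCLM (𝕜 := ℂ) (c • 1 + l • C) v‖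
        ≤ ‖c • (1 : Matrix (Fin n) (Fin n) ℂ) + l • C‖ := by
      calc ‖Matrix.toEuclideanCLM (𝕜 := ℂ) (c • 1 + l • C) v‖
          ≤ ‖Matrix.toEuclideanCLM (𝕜 := ℂ)
              (c • (1 : Matrix (Fin n) (Fin n) ℂ) + l • C)‖ * ‖v‖ :=
            ContinuousLinearMap.le_opNorm _ _
        _ = ‖c • (1 : Matrix (Fin n) (Fin n) ℂ) + l • C‖ := by
            rw [hv, mul_one, ← Matrix.cstar_norm_def]
    have h3 : ‖c + z‖ < ‖c‖ := by
      calc ‖c + z‖ = ‖(inner ℂ v (Matrix.toEuclideanCLM (𝕜 := ℂ) (c • 1 + l • C) v) : ℂ)‖ := by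
            rw [h2]
        _ ≤ ‖v‖ * ‖Matrix.toEuclideanCLM (𝕜 := ℂ) (c • 1 + l • C) v‖ := norm_inner_le_norm _ _
        _ ≤ 1 * ‖c • (1 : Matrix (Fin n) (Fin n) ℂ) + l • C‖ := by rw [hv]; gcongr
        _ < ‖c‖ := by rw [one_mul]; exact key
    have h4 : Complex.normSq (c + z) < Complex.normSq c := by
      rw [Complex.normSq_eq_norm_sq, Complex.normSq_eq_norm_sq]
      exact pow_lt_pow_left₀ h3 (norm_nonneg _) two_ne_zero
    rw [Complex.normSq_add] at h4
    have h5 : (c * (starRingEnd ℂ) z).re < 0 := by nlinarith [Complex.normSq_nonneg z]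
    have h6 : g v = (c * (starRingEnd ℂ) z).re := by
      have e : (starRingEnd ℂ) c * z = (starRingEnd ℂ) (c * (starRingEnd ℂ) z) := by
        rw [map_mul, Complex.conj_conj]
      simp only [hgdef, ← hzdef, e, Complex.conj_re]
    rw [h6]; exact h5
  -- compactness: uniform bound on the sphere
  have hcont : Continuous g := by
    apply Complex.continuous_re.comp
    exact (continuous_const.mul (continuous_const.mul
      (continuous_id.inner (S.continuous.comp continuous_id))))
  obtain ⟨v₀, hv₀mem, hmax⟩ := (isCompact_sphere (0 : EuclideanSpace ℂ (Fin n)) 1).exists_isMaxOn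
    ⟨v1, by simpa [mem_sphere_zero_iff_norm] using hv1⟩ hcont.continuousOn
  have hv₀ : ‖v₀‖ = 1 := mem_sphere_zero_iff_norm.mp hv₀mem
  set δ : ℝ := -g v₀ with hδdef
  have hδ : 0 < δ := neg_pos.mpr (hneg v₀ hv₀)
  have hg : ∀ v : EuclideanSpace ℂ (Fin n), ‖v‖ = 1 → g v ≤ -δ := by
    intro v hv
    have := hmax (mem_sphere_zero_iff_norm.mpr hv)
    simp only [hδdef, neg_neg]
    exact this
  -- the perturbation
  set K : ℝ := ‖c‖ ^ 2 * ‖l‖ ^ 2 with hKdef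
  have hK : 0 ≤ K := by positivity
  set s : ℝ := δ / (K + 1) with hsdef
  have hs : 0 < s := by positivity
  set t : ℂ := (s : ℂ) * (c * (starRingEnd ℂ) l) with htdef
  have hnt : ‖t‖ ^ 2 = s ^ 2 * K := by
    simp [htdef, hKdef, norm_mul, mul_pow, abs_of_pos hs]
  -- bound on unit vectors
  have hb : ∀ v : EuclideanSpace ℂ (Fin n), ‖v‖ = 1 → ‖S v + t • v‖ ^ 2 ≤ ‖C‖ ^ 2 - s * δ := by
    intro v hv
    have e0 : ‖S v + t • v‖ ^ 2
        = ‖S v‖ ^ 2 + 2 * RCLike.re (inner ℂ (S v) (t • v) : ℂ) + ‖t • v‖ ^ 2 :=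
      norm_add_sq _ _
    have e1 : (inner ℂ (S v) (t • v) : ℂ) = (s : ℂ) * (starRingEnd ℂ)
        ((starRingEnd ℂ) c * (l * inner ℂ v (S v))) := by
      rw [inner_smul_right, ← inner_conj_symm v (S v), htdef]
      simp [map_mul]
      ring
    have e2 : RCLike.re (inner ℂ (S v) (t • v) : ℂ) = s * g v := by
      rw [e1]
      simp only [hgdef, RCLike.re_to_complex, Complex.re_ofReal_mul, Complex.conj_re]
    have e3 : ‖S v‖ ≤ ‖C‖ := by
      calc ‖S v‖ ≤ ‖S‖ * ‖v‖ := ContinuousLinearMap.le_opNorm _ _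
        _ = ‖C‖ := by rw [hv, mul_one, hSdef, ← Matrix.cstar_norm_def]
    have e4 : ‖t • v‖ ^ 2 = s ^ 2 * K := by rw [norm_smul, hv, mul_one, hnt]
    have e5 : g v ≤ -δ := hg v hv
    have hsK : s * K ≤ δ := by rw [hsdef]; exact aux_sK_le δ K hδ hK
    rw [e0, e2, e4]
    exact aux_arith _ _ _ _ _ _ e3 (norm_nonneg _) e5 hsK hs
  have hr0 : 0 ≤ ‖C‖ ^ 2 - s * δ := le_trans (sq_nonneg _) (hb v1 hv1)
  set r : ℝ := Real.sqrt (‖C‖ ^ 2 - s * δ) with hrdef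
  have hrC : r < ‖C‖ := by
    have h1 : r < Real.sqrt (‖C‖ ^ 2) := Real.sqrt_lt_sqrt hr0 (by linarith [mul_pos hs hδ])
    rwa [Real.sqrt_sq (norm_nonneg _)] at h1
  -- norm bound for the perturbed matrix
  have hD : ‖C + t • (1 : Matrix (Fin n) (Fin n) ℂ)‖ ≤ r := by
    rw [Matrix.cstar_norm_def]
    refine ContinuousLinearMap.opNorm_le_bound _ (Real.sqrt_nonneg _) fun x => ?_
    rcases eq_or_ne x 0 with rfl | hx
    · simp [Real.sqrt_nonneg]
    · set v : EuclideanSpace ℂ (Fin n) := ((‖x‖ : ℂ))⁻¹ • x with hvdef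
      have hxn : (‖x‖ : ℝ) ≠ 0 := norm_ne_zero_iff.mpr hx
      have hv : ‖v‖ = 1 := by
        rw [hvdef, norm_smul]
        simp [hxn]
      have happ : ∀ w : EuclideanSpace ℂ (Fin n), Matrix.toEuclideanCLM (𝕜 := ℂ)
          (C + t • (1 : Matrix (Fin n) (Fin n) ℂ)) w = S w + t • w := by
        intro w
        rw [map_add, map_smul, map_one, ContinuousLinearMap.add_apply,
          ContinuousLinearMap.smul_apply, ContinuousLinearMap.one_apply, hSdef]
      have h1 : ‖Matrix.toEuclideanCLM (𝕜 := ℂ) (C + t • (1 : Matrix (Fin n) (Fin n) ℂ)) v‖ ≤ r := by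
        rw [happ v, hrdef]
        have h2 := hb v hv
        have := Real.sqrt_le_sqrt h2
        rwa [Real.sqrt_sq (norm_nonneg _)] at this
      have hxv : x = (‖x‖ : ℂ) • v := by
        rw [hvdef, smul_smul, mul_inv_cancel₀ (by exact_mod_cast hxn), one_smul]
      calc ‖Matrix.toEuclideanCLM (𝕜 := ℂ) (C + t • (1 : Matrix (Fin n) (Fin n) ℂ)) x‖
          = ‖x‖ * ‖Matrix.toEuclideanCLM (𝕜 := ℂ) (C + t • (1 : Matrix (Fin n) (Fin n) ℂ)) v‖ := by
            conv_lhs => rw [hxv]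
            rw [map_smul, norm_smul]
            simp
        _ ≤ ‖x‖ * r := by gcongr
        _ = r * ‖x‖ := mul_comm _ _
  -- derive the contradiction from hBA
  have hBC : ‖B‖ = ‖C‖ := (unit_mul_norm hUH B).symm
  have hBA' := hBA (t / c)
  have hfinal : B + (t / c) • A = U * (C + t • (1 : Matrix (Fin n) (Fin n) ℂ)) := by
    rw [hA, Matrix.mul_add, hCdef, ← Matrix.mul_assoc, hUU, one_mul, Matrix.mul_smul,
      Matrix.mul_one, smul_smul, div_mul_cancel₀ _ hc]
  rw [hfinal, unit_mul_norm hU, hBC] at hBA'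
  exact absurd (hBA'.trans hD) (not_le.mpr hrC)
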